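/- There exists a constant c > 0 with the following property. Let w and θ be continuously differentiable real-valued functions on Ω that vanish on the planes {z = 0} and {z = 1}, and let F(z) = ⨍_{[0,l_x]×[0,l_y]} w(x,y,z) θ(x,y,z) dx dy denote the horizontal average of their product. Then for every ε ∈ (0, 1], ∫_0^1 (F(z) − 1)² dz + ε · (⨍_Ω |∂_z w|²) · (⨍_Ω |∂_z θ|²) ≥ c ε^{1/3}. -/

import Mathlib

open MeasureTheory intervalIntegral

/-- Cauchy–Schwarz inequality for integrals of real functions. -/
private lemma cs_integral {α : Type*} [MeasurableSpace α] {μ : Measure α} {f g : α → ℝ}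
    (hf2 : Integrable (fun a => f a ^ 2) μ) (hg2 : Integrable (fun a => g a ^ 2) μ)
    (hfg : Integrable (fun a => f a * g a) μ) :
    (∫ a, f a * g a ∂μ) ^ 2 ≤ (∫ a, f a ^ 2 ∂μ) * (∫ a, g a ^ 2 ∂μ) := by
  have key : ∀ t : ℝ, 0 ≤ (∫ a, g a ^ 2 ∂μ) * (t * t) + (2 * ∫ a, f a * g a ∂μ) * t
      + (∫ a, f a ^ 2 ∂μ) := by
    intro t
    have h0 : 0 ≤ ∫ a, (f a + t * g a) ^ 2 ∂μ := integral_nonneg fun a => sq_nonneg _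
    have expand : ∫ a, (f a + t * g a) ^ 2 ∂μ
        = (∫ a, f a ^ 2 ∂μ) + ((2 * t) * ∫ a, f a * g a ∂μ)
          + ((t * t) * ∫ a, g a ^ 2 ∂μ) := by
      have e : (fun a => (f a + t * g a) ^ 2)
          = fun a => f a ^ 2 + ((2 * t) * (f a * g a) + (t * t) * g a ^ 2) := by
        funext a; ring
      have hX : Integrable (fun a => (2 * t) * (f a * g a) + (t * t) * g a ^ 2) μ :=
        (hfg.const_mul _).add (hg2.const_mul _)
      have h1 : Integrable (fun a => (2 * t) * (f a * g a)) μ := hfg.const_mul _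
      have h2 : Integrable (fun a => (t * t) * g a ^ 2) μ := hg2.const_mul _
      rw [e, integral_add hf2 hX, integral_add h1 h2, MeasureTheory.integral_const_mul,
        MeasureTheory.integral_const_mul]
      ring
    nlinarith [h0, expand]
  have hd := discrim_le_zero key
  rw [discrim] at hd
  nlinarith [hd]

/-- The elementary final step of Howard's argument. -/
private lemma howard_final {F : ℝ → ℝ} {δ M : ℝ}
    (hδ0 : 0 < δ) (hδ1 : δ ≤ 1) (hM0 : 0 ≤ M)
    (hIf : IntervalIntegrable (fun z => (F z - 1) ^ 2) volume 0 1)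
    (hF : ∀ z ∈ Set.Icc (0:ℝ) 1, F z ≤ z * M) :
    1 / 4 * δ ≤ (∫ z in (0:ℝ)..1, (F z - 1) ^ 2) + δ ^ 3 * M ^ 2 := by
  have hT0 : 0 ≤ ∫ z in (0:ℝ)..1, (F z - 1) ^ 2 :=
    intervalIntegral.integral_nonneg (by norm_num) fun z _ => sq_nonneg _
  by_cases hcase : 1 ≤ 2 * δ * M
  · have h1 : 1 ≤ (2 * δ * M) * (2 * δ * M) :=
      one_le_mul_of_one_le_of_one_le hcase hcase
    nlinarith [mul_le_mul_of_nonneg_left h1 hδ0.le, hT0]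
  · push_neg at hcase
    have h1 : IntervalIntegrable (fun z => (F z - 1) ^ 2) volume 0 δ := by
      apply hIf.mono_set
      rw [Set.uIcc_of_le hδ0.le, Set.uIcc_of_le zero_le_one]
      exact Set.Icc_subset_Icc le_rfl hδ1
    have h2 : IntervalIntegrable (fun z => (F z - 1) ^ 2) volume δ 1 := by
      apply hIf.mono_set
      rw [Set.uIcc_of_le hδ1, Set.uIcc_of_le zero_le_one]
      exact Set.Icc_subset_Icc hδ0.le le_rfl
    have hsplit : (∫ z in (0:ℝ)..δ, (F z - 1) ^ 2) + ∫ z in δ..1, (F z - 1) ^ 2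
        = ∫ z in (0:ℝ)..1, (F z - 1) ^ 2 :=
      intervalIntegral.integral_add_adjacent_intervals h1 h2
    have h3 : 0 ≤ ∫ z in δ..1, (F z - 1) ^ 2 :=
      intervalIntegral.integral_nonneg hδ1 fun z _ => sq_nonneg _
    have h4 : (∫ _z in (0:ℝ)..δ, (1/4 : ℝ)) ≤ ∫ z in (0:ℝ)..δ, (F z - 1) ^ 2 := by
      apply intervalIntegral.integral_mono_on hδ0.le intervalIntegrable_const h1
      intro z hz
      have hz1 : z ∈ Set.Icc (0:ℝ) 1 := ⟨hz.1, hz.2.trans hδ1⟩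
      have hb := hF z hz1
      have hzM : z * M ≤ δ * M := mul_le_mul_of_nonneg_right hz.2 hM0
      nlinarith
    rw [intervalIntegral.integral_const, smul_eq_mul, sub_zero] at h4
    nlinarith [mul_nonneg (mul_nonneg (pow_nonneg hδ0.le 3) hM0) hM0]

/-- Howard's a priori lower bound (eq. (6.4)): there is a universal `c > 0` such that
for all `l_x, l_y > 0`, all continuously differentiable `w, θ` on
`Ω = [0,l_x] × [0,l_y] × [0,1]` vanishing on `{z = 0}` and `{z = 1}`, and all
`ε ∈ (0,1]`, the horizontally averaged flux `F(z) = ⨍ w θ` satisfies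
`∫_0^1 (F(z) − 1)² dz + ε (⨍_Ω |∂_z w|²)(⨍_Ω |∂_z θ|²) ≥ c ε^{1/3}`. -/
theorem stmt10 :
    ∃ c > (0:ℝ), ∀ lx ly : ℝ, 0 < lx → 0 < ly →
      ∀ w θ : ℝ × ℝ × ℝ → ℝ,
      ContDiff ℝ 1 w → ContDiff ℝ 1 θ →
      (∀ x y : ℝ, w (x, y, 0) = 0) → (∀ x y : ℝ, w (x, y, 1) = 0) →
      (∀ x y : ℝ, θ (x, y, 0) = 0) → (∀ x y : ℝ, θ (x, y, 1) = 0) →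
      ∀ ε ∈ Set.Ioc (0:ℝ) 1,
      c * ε ^ ((1:ℝ)/3)
        ≤ (∫ z in (0:ℝ)..1,
              ((lx * ly)⁻¹ * (∫ p in Set.Icc 0 lx ×ˢ Set.Icc 0 ly,
                  w (p.1, p.2, z) * θ (p.1, p.2, z)) - 1) ^ 2)
          + ε * ((lx * ly)⁻¹ * ∫ p in Set.Icc 0 lx ×ˢ Set.Icc 0 ly ×ˢ Set.Icc (0:ℝ) 1,
                  (deriv (fun t => w (p.1, p.2.1, t)) p.2.2) ^ 2)
              * ((lx * ly)⁻¹ * ∫ p in Set.Icc 0 lx ×ˢ Set.Icc 0 ly ×ˢ Set.Icc (0:ℝ) 1,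
                  (deriv (fun t => θ (p.1, p.2.1, t)) p.2.2) ^ 2) := by
  refine ⟨1/4, by norm_num, ?_⟩
  intro lx ly hlx hly w θ hw hθ hw0 _hw1 hθ0 _hθ1 ε hε
  obtain ⟨hε0, hε1⟩ := hε
  -- abbreviations
  set s : Set ℝ := Set.Icc 0 lx with hs_def
  set t : Set ℝ := Set.Icc 0 ly with ht_def
  set u : Set ℝ := Set.Icc (0:ℝ) 1 with hu_def
  set μx : Measure ℝ := volume.restrict s with hμx_def
  set μy : Measure ℝ := volume.restrict t with hμy_def
  set μz : Measure ℝ := volume.restrict u with hμz_def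
  have hcs : IsCompact s := isCompact_Icc
  have hct : IsCompact t := isCompact_Icc
  have hcu : IsCompact u := isCompact_Icc
  -- vertical derivatives
  set Dw : ℝ × ℝ × ℝ → ℝ := fun p => fderiv ℝ w p (0, 0, 1) with hDw_def
  set Dθ : ℝ × ℝ × ℝ → ℝ := fun p => fderiv ℝ θ p (0, 0, 1) with hDθ_def
  have hwd : ∀ x y z : ℝ, HasDerivAt (fun r => w (x, y, r)) (Dw (x, y, z)) z := by
    intro x y z
    have hj : HasDerivAt (fun r : ℝ => ((x, y, r) : ℝ × ℝ × ℝ)) ((0:ℝ), (0:ℝ), (1:ℝ)) z :=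
      (hasDerivAt_const z x).prodMk ((hasDerivAt_const z y).prodMk (hasDerivAt_id z))
    exact ((hw.differentiable one_ne_zero _).hasFDerivAt).comp_hasDerivAt z hj
  have hθd : ∀ x y z : ℝ, HasDerivAt (fun r => θ (x, y, r)) (Dθ (x, y, z)) z := by
    intro x y z
    have hj : HasDerivAt (fun r : ℝ => ((x, y, r) : ℝ × ℝ × ℝ)) ((0:ℝ), (0:ℝ), (1:ℝ)) z :=
      (hasDerivAt_const z x).prodMk ((hasDerivAt_const z y).prodMk (hasDerivAt_id z))
    exact ((hθ.differentiable one_ne_zero _).hasFDerivAt).comp_hasDerivAt z hj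
  have hDwc : Continuous Dw :=
    (hw.continuous_fderiv_apply one_ne_zero).comp (continuous_id.prodMk continuous_const)
  have hDθc : Continuous Dθ :=
    (hθ.continuous_fderiv_apply one_ne_zero).comp (continuous_id.prodMk continuous_const)
  have hderiv_w : ∀ p : ℝ × ℝ × ℝ, deriv (fun r => w (p.1, p.2.1, r)) p.2.2 = Dw p := by
    intro p
    have h := (hwd p.1 p.2.1 p.2.2).deriv
    simpa using h
  have hderiv_θ : ∀ p : ℝ × ℝ × ℝ, deriv (fun r => θ (p.1, p.2.1, r)) p.2.2 = Dθ p := by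
    intro p
    have h := (hθd p.1 p.2.1 p.2.2).deriv
    simpa using h
  -- measure bookkeeping
  have hμyz : μy.prod μz = (volume : Measure (ℝ × ℝ)).restrict (t ×ˢ u) := by
    rw [hμy_def, hμz_def, Measure.prod_restrict]; rfl
  have hμ3 : μx.prod (μy.prod μz)
      = (volume : Measure (ℝ × ℝ × ℝ)).restrict (s ×ˢ t ×ˢ u) := by
    rw [hμyz, hμx_def, Measure.prod_restrict]; rfl
  have hμxy : μx.prod μy = (volume : Measure (ℝ × ℝ)).restrict (s ×ˢ t) := by
    rw [hμx_def, hμy_def, Measure.prod_restrict]; rfl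
  have hμxyz : (μx.prod μy).prod μz
      = (volume : Measure ((ℝ × ℝ) × ℝ)).restrict ((s ×ˢ t) ×ˢ u) := by
    rw [hμxy, hμz_def, Measure.prod_restrict]; rfl
  -- integrability of continuous functions
  have int3 : ∀ {f : ℝ × ℝ × ℝ → ℝ}, Continuous f → Integrable f (μx.prod (μy.prod μz)) := by
    intro f hf
    rw [hμ3]
    exact hf.continuousOn.integrableOn_compact (hcs.prod (hct.prod hcu))
  have int2 : ∀ {f : ℝ × ℝ → ℝ}, Continuous f → Integrable f (μx.prod μy) := by
    intro f hf
    rw [hμxy]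
    exact hf.continuousOn.integrableOn_compact (hcs.prod hct)
  have intc : ∀ {f : (ℝ × ℝ) × ℝ → ℝ}, Continuous f → Integrable f ((μx.prod μy).prod μz) := by
    intro f hf
    rw [hμxyz]
    exact hf.continuousOn.integrableOn_compact ((hcs.prod hct).prod hcu)
  have hassoc_cont : Continuous fun x : (ℝ × ℝ) × ℝ => ((x.1.1, x.1.2, x.2) : ℝ × ℝ × ℝ) :=
    (continuous_fst.comp continuous_fst).prodMk
      ((continuous_snd.comp continuous_fst).prodMk continuous_snd)
  -- Fubini for continuous integrands
  have fub : ∀ {f : ℝ × ℝ × ℝ → ℝ}, Continuous f →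
      ∫ p, f p ∂(μx.prod (μy.prod μz))
        = ∫ q, (∫ r, f (q.1, q.2, r) ∂μz) ∂(μx.prod μy) := by
    intro f hf
    have hpres := measurePreserving_prodAssoc μx μy μz
    have h2 : Integrable (fun x : (ℝ × ℝ) × ℝ => f (x.1.1, x.1.2, x.2))
        ((μx.prod μy).prod μz) := intc (hf.comp hassoc_cont)
    calc ∫ p, f p ∂(μx.prod (μy.prod μz))
        = ∫ x, f (MeasurableEquiv.prodAssoc x) ∂((μx.prod μy).prod μz) :=
          (hpres.integral_comp MeasurableEquiv.prodAssoc.measurableEmbedding f).symm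
      _ = ∫ x : (ℝ × ℝ) × ℝ, f (x.1.1, x.1.2, x.2) ∂((μx.prod μy).prod μz) := rfl
      _ = ∫ q, ∫ r, f (q.1, q.2, r) ∂μz ∂(μx.prod μy) := integral_prod _ h2
  -- the vertical Dirichlet energies
  set Gw : ℝ × ℝ → ℝ := fun q => ∫ r, (Dw (q.1, q.2, r)) ^ 2 ∂μz with hGw_def
  set Gθ : ℝ × ℝ → ℝ := fun q => ∫ r, (Dθ (q.1, q.2, r)) ^ 2 ∂μz with hGθ_def
  have hGw_nonneg : ∀ q, 0 ≤ Gw q := fun q => integral_nonneg fun r => sq_nonneg _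
  have hGθ_nonneg : ∀ q, 0 ≤ Gθ q := fun q => integral_nonneg fun r => sq_nonneg _
  have hGw_int : Integrable Gw (μx.prod μy) :=
    (intc ((hDwc.comp hassoc_cont).pow 2)).integral_prod_left
  have hGθ_int : Integrable Gθ (μx.prod μy) :=
    (intc ((hDθc.comp hassoc_cont).pow 2)).integral_prod_left
  set Iw : ℝ := ∫ q, Gw q ∂(μx.prod μy) with hIw_def
  set Iθ : ℝ := ∫ q, Gθ q ∂(μx.prod μy) with hIθ_def
  have hIw_nonneg : 0 ≤ Iw := integral_nonneg hGw_nonneg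
  have hIθ_nonneg : 0 ≤ Iθ := integral_nonneg hGθ_nonneg
  -- the statement's 3D integrals equal `Iw`, `Iθ`
  have hIw_eq : (∫ p in s ×ˢ t ×ˢ u, (deriv (fun r => w (p.1, p.2.1, r)) p.2.2) ^ 2) = Iw := by
    have e : (fun p : ℝ × ℝ × ℝ => (deriv (fun r => w (p.1, p.2.1, r)) p.2.2) ^ 2)
        = fun p => (Dw p) ^ 2 := by
      funext p; rw [hderiv_w p]
    rw [e, hIw_def, ← fub (f := fun p => (Dw p) ^ 2) (hDwc.pow 2), hμ3]
  have hIθ_eq : (∫ p in s ×ˢ t ×ˢ u, (deriv (fun r => θ (p.1, p.2.1, r)) p.2.2) ^ 2) = Iθ := by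
    have e : (fun p : ℝ × ℝ × ℝ => (deriv (fun r => θ (p.1, p.2.1, r)) p.2.2) ^ 2)
        = fun p => (Dθ p) ^ 2 := by
      funext p; rw [hderiv_θ p]
    rw [e, hIθ_def, ← fub (f := fun p => (Dθ p) ^ 2) (hDθc.pow 2), hμ3]
  -- pointwise bound from FTC and Cauchy–Schwarz in z
  have key1 : ∀ (D : ℝ × ℝ × ℝ → ℝ) (f : ℝ × ℝ × ℝ → ℝ), Continuous D →
      (∀ x y z : ℝ, HasDerivAt (fun r => f (x, y, r)) (D (x, y, z)) z) →
      (∀ x y : ℝ, f (x, y, 0) = 0) →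
      ∀ (x y : ℝ) {z : ℝ}, z ∈ u →
        (f (x, y, z)) ^ 2 ≤ z * ∫ r, (D (x, y, r)) ^ 2 ∂μz := by
    intro D f hDc hfd hf0 x y z hz
    rw [hu_def] at hz
    obtain ⟨hz0, hz1⟩ := hz
    have hDc1 : Continuous fun r => D (x, y, r) :=
      hDc.comp (continuous_const.prodMk (continuous_const.prodMk continuous_id))
    have hFTC : ∫ r in (0:ℝ)..z, D (x, y, r) = f (x, y, z) := by
      rw [intervalIntegral.integral_eq_sub_of_hasDerivAt
        (fun r _ => hfd x y r) (hDc1.intervalIntegrable 0 z), hf0 x y, sub_zero]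
    have hIoc : ∫ r in (0:ℝ)..z, D (x, y, r)
        = ∫ r, D (x, y, r) ∂(volume.restrict (Set.Ioc 0 z)) :=
      intervalIntegral.integral_of_le hz0
    have hsub : Set.Ioc (0:ℝ) z ⊆ u := by
      rw [hu_def]; exact fun r hr => ⟨hr.1.le, hr.2.trans hz1⟩
    have hint_u : IntegrableOn (fun r => (D (x, y, r)) ^ 2) u volume :=
      (hDc1.pow 2).continuousOn.integrableOn_compact hcu
    have hint_Ioc : IntegrableOn (fun r => (D (x, y, r)) ^ 2) (Set.Ioc 0 z) volume :=
      hint_u.mono_set hsub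
    have hint_Ioc1 : IntegrableOn (fun r => D (x, y, r)) (Set.Ioc 0 z) volume := by
      apply IntegrableOn.mono_set _ hsub
      exact hDc1.continuousOn.integrableOn_compact hcu
    have hcs2 := cs_integral (μ := volume.restrict (Set.Ioc 0 z))
      (f := fun _ => (1:ℝ)) (g := fun r => D (x, y, r))
      (by simpa using (integrable_const (1:ℝ)).restrict) hint_Ioc (by simp only [one_mul]; exact hint_Ioc1)
    have hone : (∫ _a, (1:ℝ) ^ 2 ∂(volume.restrict (Set.Ioc 0 z))) = z := by
      simp [Real.volume_Ioc, ENNReal.toReal_ofReal hz0, hz0]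
    have hmono : (∫ r, (D (x, y, r)) ^ 2 ∂(volume.restrict (Set.Ioc 0 z)))
        ≤ ∫ r, (D (x, y, r)) ^ 2 ∂μz := by
      rw [hμz_def]
      exact setIntegral_mono_set hint_u
        (Filter.Eventually.of_forall fun r => sq_nonneg _) (HasSubset.Subset.eventuallyLE hsub)
    have h1 : (∫ r, D (x, y, r) ∂(volume.restrict (Set.Ioc 0 z))) ^ 2
        ≤ z * ∫ r, (D (x, y, r)) ^ 2 ∂(volume.restrict (Set.Ioc 0 z)) := by
      have := hcs2
      rw [hone] at this
      simpa using this
    calc (f (x, y, z)) ^ 2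
        = (∫ r, D (x, y, r) ∂(volume.restrict (Set.Ioc 0 z))) ^ 2 := by rw [← hIoc, hFTC]
      _ ≤ z * ∫ r, (D (x, y, r)) ^ 2 ∂(volume.restrict (Set.Ioc 0 z)) := h1
      _ ≤ z * ∫ r, (D (x, y, r)) ^ 2 ∂μz := mul_le_mul_of_nonneg_left hmono hz0
  have key1w := key1 Dw w hDwc hwd hw0
  have key1θ := key1 Dθ θ hDθc hθd hθ0
  -- pointwise bound on the product
  have prod_bd : ∀ (q : ℝ × ℝ) {z : ℝ}, z ∈ u →
      |w (q.1, q.2, z) * θ (q.1, q.2, z)| ≤ z * (Real.sqrt (Gw q) * Real.sqrt (Gθ q)) := by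
    intro q z hz
    have hz0 : 0 ≤ z := by rw [hu_def] at hz; exact hz.1
    have h1 : |w (q.1, q.2, z)| ≤ Real.sqrt (z * Gw q) := by
      rw [← Real.sqrt_sq_eq_abs]
      exact Real.sqrt_le_sqrt (key1w q.1 q.2 hz)
    have h2 : |θ (q.1, q.2, z)| ≤ Real.sqrt (z * Gθ q) := by
      rw [← Real.sqrt_sq_eq_abs]
      exact Real.sqrt_le_sqrt (key1θ q.1 q.2 hz)
    calc |w (q.1, q.2, z) * θ (q.1, q.2, z)|
        = |w (q.1, q.2, z)| * |θ (q.1, q.2, z)| := abs_mul _ _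
      _ ≤ Real.sqrt (z * Gw q) * Real.sqrt (z * Gθ q) :=
          mul_le_mul h1 h2 (abs_nonneg _) (Real.sqrt_nonneg _)
      _ = z * (Real.sqrt (Gw q) * Real.sqrt (Gθ q)) := by
          rw [Real.sqrt_mul hz0, Real.sqrt_mul hz0]
          rw [show Real.sqrt z * Real.sqrt (Gw q) * (Real.sqrt z * Real.sqrt (Gθ q))
            = (Real.sqrt z * Real.sqrt z) * (Real.sqrt (Gw q) * Real.sqrt (Gθ q)) by ring,
            Real.mul_self_sqrt hz0]
  -- integrability of √Gw √Gθ
  have hsqrt_meas : AEStronglyMeasurable (fun q => Real.sqrt (Gw q) * Real.sqrt (Gθ q))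
      (μx.prod μy) :=
    (Real.continuous_sqrt.comp_aestronglyMeasurable hGw_int.1).mul
      (Real.continuous_sqrt.comp_aestronglyMeasurable hGθ_int.1)
  have hsqrt_int : Integrable (fun q => Real.sqrt (Gw q) * Real.sqrt (Gθ q)) (μx.prod μy) := by
    refine Integrable.mono' ((hGw_int.add hGθ_int).const_mul (1/2)) hsqrt_meas ?_
    refine Filter.Eventually.of_forall fun q => ?_
    have ha := hGw_nonneg q
    have hb := hGθ_nonneg q
    rw [Real.norm_eq_abs, abs_of_nonneg (mul_nonneg (Real.sqrt_nonneg _) (Real.sqrt_nonneg _))]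
    simp only [Pi.add_apply]
    nlinarith [Real.sq_sqrt ha, Real.sq_sqrt hb,
      sq_nonneg (Real.sqrt (Gw q) - Real.sqrt (Gθ q))]
  -- Cauchy–Schwarz in (x, y)
  have hCS2 : (∫ q, Real.sqrt (Gw q) * Real.sqrt (Gθ q) ∂(μx.prod μy))
      ≤ Real.sqrt (Iw * Iθ) := by
    have e1 : (fun q => Real.sqrt (Gw q) ^ 2) = Gw := by
      funext q; exact Real.sq_sqrt (hGw_nonneg q)
    have e2 : (fun q => Real.sqrt (Gθ q) ^ 2) = Gθ := by
      funext q; exact Real.sq_sqrt (hGθ_nonneg q)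
    have h := cs_integral (μ := μx.prod μy)
      (f := fun q => Real.sqrt (Gw q)) (g := fun q => Real.sqrt (Gθ q))
      (by rw [e1]; exact hGw_int) (by rw [e2]; exact hGθ_int) hsqrt_int
    rw [e1, e2] at h
    have hnn : 0 ≤ ∫ q, Real.sqrt (Gw q) * Real.sqrt (Gθ q) ∂(μx.prod μy) :=
      integral_nonneg fun q => mul_nonneg (Real.sqrt_nonneg _) (Real.sqrt_nonneg _)
    rw [Real.le_sqrt hnn (mul_nonneg hIw_nonneg hIθ_nonneg)]
    exact h
  -- the flux bound
  have hflux : ∀ {z : ℝ}, z ∈ u →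
      |∫ q, w (q.1, q.2, z) * θ (q.1, q.2, z) ∂(μx.prod μy)| ≤ z * Real.sqrt (Iw * Iθ) := by
    intro z hz
    have hz0 : 0 ≤ z := by rw [hu_def] at hz; exact hz.1
    have hwθc : Continuous fun q : ℝ × ℝ => w (q.1, q.2, z) * θ (q.1, q.2, z) := by
      have hq : Continuous fun q : ℝ × ℝ => ((q.1, q.2, z) : ℝ × ℝ × ℝ) :=
        continuous_fst.prodMk (continuous_snd.prodMk continuous_const)
      exact (hw.continuous.comp hq).mul (hθ.continuous.comp hq)
    have hint : Integrable (fun q : ℝ × ℝ => w (q.1, q.2, z) * θ (q.1, q.2, z)) (μx.prod μy) :=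
      int2 hwθc
    calc |∫ q, w (q.1, q.2, z) * θ (q.1, q.2, z) ∂(μx.prod μy)|
        ≤ ∫ q, |w (q.1, q.2, z) * θ (q.1, q.2, z)| ∂(μx.prod μy) := by
          simpa only [Real.norm_eq_abs] using norm_integral_le_integral_norm
            (μ := μx.prod μy) (fun q : ℝ × ℝ => w (q.1, q.2, z) * θ (q.1, q.2, z))
      _ ≤ ∫ q, z * (Real.sqrt (Gw q) * Real.sqrt (Gθ q)) ∂(μx.prod μy) :=
          integral_mono hint.abs (hsqrt_int.const_mul z) (fun q => prod_bd q hz)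
      _ = z * ∫ q, Real.sqrt (Gw q) * Real.sqrt (Gθ q) ∂(μx.prod μy) := MeasureTheory.integral_const_mul z _
      _ ≤ z * Real.sqrt (Iw * Iθ) := mul_le_mul_of_nonneg_left hCS2 hz0
  -- normalization
  have hll : (0:ℝ) < lx * ly := mul_pos hlx hly
  set A : ℝ := (lx * ly)⁻¹ * Iw with hA_def
  set B : ℝ := (lx * ly)⁻¹ * Iθ with hB_def
  have hA0 : 0 ≤ A := mul_nonneg (inv_nonneg.2 hll.le) hIw_nonneg
  have hB0 : 0 ≤ B := mul_nonneg (inv_nonneg.2 hll.le) hIθ_nonneg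
  set M : ℝ := Real.sqrt (A * B) with hM_def
  have hM0 : 0 ≤ M := Real.sqrt_nonneg _
  have hM2 : M ^ 2 = A * B := Real.sq_sqrt (mul_nonneg hA0 hB0)
  have hMeq : (lx * ly)⁻¹ * Real.sqrt (Iw * Iθ) = M := by
    rw [hM_def, hA_def, hB_def,
      show (lx * ly)⁻¹ * Iw * ((lx * ly)⁻¹ * Iθ) = ((lx * ly)⁻¹) ^ 2 * (Iw * Iθ) by ring,
      Real.sqrt_mul (sq_nonneg _), Real.sqrt_sq (inv_nonneg.2 hll.le)]
  -- the flux function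
  set F : ℝ → ℝ := fun z =>
      (lx * ly)⁻¹ * ∫ p in s ×ˢ t, w (p.1, p.2, z) * θ (p.1, p.2, z) with hF_def
  have hFset : ∀ z : ℝ, (∫ p in s ×ˢ t, w (p.1, p.2, z) * θ (p.1, p.2, z))
      = ∫ q, w (q.1, q.2, z) * θ (q.1, q.2, z) ∂(μx.prod μy) := by
    intro z; rw [hμxy]
  have hFabs : ∀ {z : ℝ}, z ∈ u → |F z| ≤ z * M := by
    intro z hz
    rw [hF_def]
    simp only []
    rw [hFset z, abs_mul, abs_of_nonneg (inv_nonneg.2 hll.le), ← hMeq]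
    calc (lx * ly)⁻¹ * |∫ q, w (q.1, q.2, z) * θ (q.1, q.2, z) ∂(μx.prod μy)|
        ≤ (lx * ly)⁻¹ * (z * Real.sqrt (Iw * Iθ)) :=
          mul_le_mul_of_nonneg_left (hflux hz) (inv_nonneg.2 hll.le)
      _ = z * ((lx * ly)⁻¹ * Real.sqrt (Iw * Iθ)) := by ring
  have hFb : ∀ z ∈ Set.Icc (0:ℝ) 1, F z ≤ z * M := by
    intro z hz
    have := hFabs (show z ∈ u by rwa [hu_def])
    exact (le_abs_self _).trans this
  -- interval integrability of (F - 1)^2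
  have hIf : IntervalIntegrable (fun z => (F z - 1) ^ 2) volume 0 1 := by
    have hΦc : Continuous fun x : (ℝ × ℝ) × ℝ =>
        w (x.1.1, x.1.2, x.2) * θ (x.1.1, x.1.2, x.2) :=
      (hw.continuous.comp hassoc_cont).mul (hθ.continuous.comp hassoc_cont)
    have hFsm : StronglyMeasurable fun z => ∫ q, w (q.1, q.2, z) * θ (q.1, q.2, z)
        ∂(μx.prod μy) := hΦc.stronglyMeasurable.integral_prod_left'
    have hGsm : StronglyMeasurable fun z => (F z - 1) ^ 2 := by
      have : StronglyMeasurable F := by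
        rw [hF_def]
        simp only [hFset]
        exact hFsm.const_mul _
      exact (this.sub stronglyMeasurable_const).pow 2
    have hbd : IntegrableOn (fun z => (F z - 1) ^ 2) (Set.Icc (0:ℝ) 1) volume := by
      refine Integrable.mono' (integrable_const ((M + 1) ^ 2))
        hGsm.aestronglyMeasurable.restrict ?_
      refine (ae_restrict_iff' measurableSet_Icc).2 (Filter.Eventually.of_forall fun z hz => ?_)
      have h1 : |F z| ≤ z * M := hFabs (show z ∈ u by rwa [hu_def])
      have h2 : z * M ≤ M := by
        have := mul_le_mul_of_nonneg_right hz.2 hM0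
        simpa using this
      have h3 : |F z| ≤ M := h1.trans h2
      rw [Real.norm_eq_abs, abs_of_nonneg (sq_nonneg _)]
      nlinarith [abs_le.1 h3]
    have : IntegrableOn (fun z => (F z - 1) ^ 2) (Set.uIcc (0:ℝ) 1) volume := by
      rwa [Set.uIcc_of_le (zero_le_one)]
    exact this.intervalIntegrable
  -- final elementary argument
  set δ : ℝ := ε ^ ((1:ℝ)/3) with hδ_def
  have hδ0 : 0 < δ := Real.rpow_pos_of_pos hε0 _
  have hδ1 : δ ≤ 1 := Real.rpow_le_one hε0.le hε1 (by norm_num)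
  have hδ3 : δ ^ 3 = ε := by
    rw [hδ_def, ← Real.rpow_natCast (ε ^ ((1:ℝ)/3)) 3, ← Real.rpow_mul hε0.le]
    norm_num
  have main := howard_final hδ0 hδ1 hM0 hIf hFb
  rw [hIw_eq, hIθ_eq]
  have hterm : ε * ((lx * ly)⁻¹ * Iw) * ((lx * ly)⁻¹ * Iθ) = δ ^ 3 * M ^ 2 := by
    rw [hδ3, hM2, hA_def, hB_def]; ring
  rw [hterm]
  exact main
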